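/- Let σ > 0, K > 2, M ≥ 0, T > 0, and let y : [0,T] → ℝ be differentiable and nonnegative with y′(t) ≤ (K/(σ + t))·y(t) + M·(σ + t) for all t ∈ [0,T]. Then for all t ∈ [0,T]: y(t) ≤ ((σ + t)/σ)^K · ( y(0) + M·σ²/(K − 2) ). -/

import Mathlib

open Set

theorem gronwall_type_inequality_with_source
    (σ K M T : ℝ) (hσ : 0 < σ) (hK : 2 < K) (hM : 0 ≤ M) (hT : 0 < T)
    (y y' : ℝ → ℝ)
    (hderiv : ∀ t ∈ Set.Icc (0 : ℝ) T, HasDerivWithinAt y (y' t) (Set.Icc 0 T) t)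
    (hnonneg : ∀ t ∈ Set.Icc (0 : ℝ) T, 0 ≤ y t)
    (hineq : ∀ t ∈ Set.Icc (0 : ℝ) T, y' t ≤ K / (σ + t) * y t + M * (σ + t)) :
    ∀ t ∈ Set.Icc (0 : ℝ) T,
      y t ≤ ((σ + t) / σ) ^ K * (y 0 + M * σ ^ 2 / (K - 2)) := by
  have hK2 : (0:ℝ) < K - 2 := by linarith
  set F : ℝ → ℝ := fun t => y t * (σ + t) ^ (-K) + M / (K - 2) * (σ + t) ^ (2 - K) with hFdef
  set G : ℝ → ℝ := fun t => y' t * (σ + t) ^ (-K) + y t * (-K * (σ + t) ^ (-K - 1) * 1)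
      + M / (K - 2) * ((2 - K) * (σ + t) ^ (2 - K - 1) * 1) with hGdef
  have hpos : ∀ t ∈ Icc (0:ℝ) T, 0 < σ + t := fun t ht => by
    have := ht.1; linarith
  have hDF : ∀ t ∈ Icc (0:ℝ) T, HasDerivWithinAt F (G t) (Icc 0 T) t := by
    intro t ht
    have hadd : HasDerivWithinAt (fun s : ℝ => σ + s) 1 (Icc 0 T) t := by
      exact ((hasDerivAt_id t).const_add σ).hasDerivWithinAt
    have h1 : HasDerivWithinAt (fun s => (σ + s) ^ (-K))
        (-K * (σ + t) ^ (-K - 1) * 1) (Icc 0 T) t := by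
      exact (Real.hasDerivAt_rpow_const (p := -K)
        (Or.inl (ne_of_gt (hpos t ht)))).comp_hasDerivWithinAt t hadd
    have h2 : HasDerivWithinAt (fun s => (σ + s) ^ (2 - K))
        ((2 - K) * (σ + t) ^ (2 - K - 1) * 1) (Icc 0 T) t := by
      exact (Real.hasDerivAt_rpow_const (p := 2 - K)
        (Or.inl (ne_of_gt (hpos t ht)))).comp_hasDerivWithinAt t hadd
    exact ((hderiv t ht).mul h1).add (h2.const_mul _)
  have hcont : ContinuousOn F (Icc 0 T) := fun t ht => (hDF t ht).continuousWithinAt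
  have hG0 : ∀ x ∈ Icc (0:ℝ) T, G x ≤ 0 := by
    intro x hx
    have hu : 0 < σ + x := hpos x hx
    have ha : 0 < (σ + x) ^ (-K) := Real.rpow_pos_of_pos hu _
    have e1 : (σ + x) ^ (-K - 1) = (σ + x) ^ (-K) / (σ + x) := by
      rw [Real.rpow_sub hu, Real.rpow_one]
    have e2 : (σ + x) ^ (2 - K - 1) = (σ + x) * (σ + x) ^ (-K) := by
      have : (2:ℝ) - K - 1 = 1 + -K := by ring
      rw [this, Real.rpow_add hu, Real.rpow_one]
    have hy := hnonneg x hx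
    have hi := hineq x hx
    simp only [hGdef, e1, e2, mul_one]
    have hia : y' x * ((σ + x) ^ (-K)) ≤ (K / (σ + x) * y x + M * (σ + x)) * ((σ + x) ^ (-K)) :=
      mul_le_mul_of_nonneg_right hi (le_of_lt ha)
    have : M / (K - 2) * ((2 - K) * ((σ + x) * (σ + x) ^ (-K)))
        = -(M * ((σ + x) * (σ + x) ^ (-K))) := by
      field_simp
      ring
    rw [this]
    have hrw : y x * (-K * ((σ + x) ^ (-K) / (σ + x)))
        = -(K / (σ + x) * y x * (σ + x) ^ (-K)) := by
      field_simp
    rw [hrw]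
    nlinarith [hia]
  have hanti : AntitoneOn F (Icc 0 T) := by
    apply antitoneOn_of_deriv_nonpos (convex_Icc 0 T) hcont
    · intro x hx
      rw [interior_Icc] at hx
      exact (((hDF x (Ioo_subset_Icc_self hx)).hasDerivAt
        (Icc_mem_nhds hx.1 hx.2)).differentiableAt).differentiableWithinAt
    · intro x hx
      rw [interior_Icc] at hx
      have hx' : x ∈ Icc (0:ℝ) T := Ioo_subset_Icc_self hx
      have hd : HasDerivAt F (G x) x :=
        (hDF x hx').hasDerivAt (Icc_mem_nhds hx.1 hx.2)
      rw [hd.deriv]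
      exact hG0 x hx'
  intro t ht
  have h0 : (0:ℝ) ∈ Icc (0:ℝ) T := ⟨le_refl _, le_of_lt hT⟩
  have hFt : F t ≤ F 0 := hanti h0 ht ht.1
  have hu : 0 < σ + t := hpos t ht
  have ha : 0 < (σ + t) ^ (-K) := Real.rpow_pos_of_pos hu _
  have hterm : 0 ≤ M / (K - 2) * (σ + t) ^ (2 - K) :=
    mul_nonneg (div_nonneg hM (le_of_lt hK2)) (Real.rpow_pos_of_pos hu _).le
  have key : y t * (σ + t) ^ (-K) ≤ F 0 := by
    have : y t * (σ + t) ^ (-K) ≤ F t := by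
      simp only [hFdef]; linarith
    linarith
  -- multiply by (σ+t)^K
  have hK' : 0 < (σ + t) ^ K := Real.rpow_pos_of_pos hu _
  have hmul : y t ≤ F 0 * (σ + t) ^ K := by
    have := mul_le_mul_of_nonneg_right key hK'.le
    rwa [mul_assoc, ← Real.rpow_add hu, neg_add_cancel, Real.rpow_zero, mul_one] at this
  refine hmul.trans_eq ?_
  simp only [hFdef, add_zero]
  rw [Real.div_rpow hu.le hσ.le]
  have eσ1 : (σ:ℝ) ^ (-K) = 1 / σ ^ K := by
    rw [Real.rpow_neg hσ.le]; ring
  have eσ2 : (σ:ℝ) ^ (2 - K) = σ ^ (2:ℕ) / σ ^ K := by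
    rw [Real.rpow_sub hσ]
    norm_num [Real.rpow_natCast]
  rw [eσ1, eσ2]
  have hσK : (σ:ℝ) ^ K ≠ 0 := ne_of_gt (Real.rpow_pos_of_pos hσ _)
  field_simp
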